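/- Let $Q$ be a finitely generated abelian group, $P$ a prime ideal of the group ring $\mathbb{Z}Q$ such that the domain $B = \mathbb{Z}Q/P$ has Krull dimension 1. Then every nonzero ideal $I$ of $B$ has finite index, i.e., $B/I$ is a finite ring. -/

import Mathlib

/-- `ℤ` is a Jacobson ring. -/
lemma aux_int_isJacobsonRing : IsJacobsonRing ℤ := by
  rw [isJacobsonRing_iff_prime_eq]
  intro P hP
  by_cases hbot : P = ⊥
  · subst hbot
    refine le_antisymm ?_ Ideal.le_jacobson
    intro x hx
    have hu := Ideal.mem_jacobson_bot.mp hx x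
    rw [Int.isUnit_iff] at hu
    have : x = 0 := by rcases hu with h | h <;> nlinarith
    simp [this]
  · haveI := hP
    haveI : P.IsMaximal := IsPrime.to_maximal_ideal hbot
    exact le_antisymm (sInf_le ⟨le_rfl, ‹P.IsMaximal›⟩) Ideal.le_jacobson

/-- A field that is a finitely generated `ℤ`-module is finite. -/
lemma aux_finite_of_field_of_finiteInt (K : Type*) [Field K] [Module.Finite ℤ K] :
    Finite K := by
  by_cases hinj : Function.Injective (algebraMap ℤ K)
  · haveI : Algebra.IsIntegral ℤ K := Algebra.IsIntegral.of_finite ℤ K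
    exact absurd ((Algebra.IsIntegral.isField_iff_isField hinj).mpr (Field.toIsField K))
      Int.not_isField
  · rw [injective_iff_map_eq_zero] at hinj
    push_neg at hinj
    obtain ⟨n, hn0, hn⟩ := hinj
    refine Module.finite_of_fg_torsion K ?_
    intro x
    refine ⟨⟨n, mem_nonZeroDivisors_of_ne_zero hn⟩, ?_⟩
    have hcast : (n : K) = 0 := by simpa using hn0
    show n • x = 0
    rw [zsmul_eq_mul, hcast, zero_mul]

/-- In a domain of Krull dimension 1, every nonzero prime ideal is maximal. -/
lemma aux_isMaximal_of_dim_one {B : Type*} [CommRing B] [IsDomain B]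
    (hdim : ringKrullDim B = 1) {p : Ideal B} [hp : p.IsPrime] (hbot : p ≠ ⊥) :
    p.IsMaximal := by
  by_contra h
  obtain ⟨m, hm, hpm⟩ := p.exists_le_maximal hp.ne_top
  have hlt : p < m := lt_of_le_of_ne hpm (by rintro rfl; exact h hm)
  let x0 : PrimeSpectrum B := ⟨⊥, Ideal.bot_prime⟩
  let x1 : PrimeSpectrum B := ⟨p, hp⟩
  let x2 : PrimeSpectrum B := ⟨m, hm.isPrime⟩
  have h01 : x0 < x1 := by
    rw [lt_iff_le_and_ne]
    exact ⟨bot_le, fun hEq => hbot ((congrArg PrimeSpectrum.asIdeal hEq).symm)⟩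
  have h12 : x1 < x2 := by
    rw [lt_iff_le_and_ne]
    exact ⟨hpm, fun hEq => hlt.ne (congrArg PrimeSpectrum.asIdeal hEq)⟩
  let l : LTSeries (PrimeSpectrum B) :=
    ⟨2, ![x0, x1, x2], by
      intro i
      fin_cases i
      · exact h01
      · exact h12⟩
  have hle := Order.LTSeries.length_le_krullDim l
  rw [show Order.krullDim (PrimeSpectrum B) = ringKrullDim B from rfl, hdim] at hle
  have h2 : ((2 : ℕ) : WithBot (WithTop ℕ)) ≤ 1 := hle
  norm_num at h2

/-- A finitely generated module killed by a finite-index ideal is finite. -/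
lemma aux_finite_of_fg_of_smul_zero {R M : Type*} [CommRing R] [AddCommGroup M] [Module R M]
    [Module.Finite R M] (K : Ideal R) [Finite (R ⧸ K)]
    (hK : ∀ a ∈ K, ∀ m : M, a • m = (0 : M)) : Finite M := by
  obtain ⟨s, hs⟩ := Module.Finite.fg_top (R := R) (M := M)
  let σ : R ⧸ K → R := Function.surjInv Ideal.Quotient.mk_surjective
  have hσ : ∀ y, Ideal.Quotient.mk K (σ y) = y := Function.surjInv_eq _
  refine Finite.of_surjective
    (fun c : (s → R ⧸ K) => ∑ i : s, σ (c i) • (i : M)) ?_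
  intro m
  have hm : m ∈ Submodule.span R (s : Set M) := by rw [hs]; exact Submodule.mem_top
  obtain ⟨f, -, hf⟩ := Submodule.mem_span_finset.mp hm
  refine ⟨fun i => Ideal.Quotient.mk K (f i), ?_⟩
  have key : ∀ i : s, σ (Ideal.Quotient.mk K (f i)) • (i : M) = f i • (i : M) := by
    intro i
    have hmem : σ (Ideal.Quotient.mk K (f i)) - f i ∈ K := by
      rw [← Ideal.Quotient.eq]; exact hσ _
    have h0 := hK _ hmem (i : M)
    rw [sub_smul, sub_eq_zero] at h0
    exact h0
  calc ∑ i : s, σ (Ideal.Quotient.mk K (f i)) • (i : M)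
      = ∑ i : s, f i • (i : M) := by simp only [key]
    _ = ∑ i ∈ s, f i • i := Finset.sum_coe_sort s (fun i => f i • i)
    _ = m := hf

/-- In a Noetherian ring, if `R⧸J` and `R⧸K` are finite then so is `R⧸(J*K)`. -/
lemma aux_finite_quot_mul {R : Type*} [CommRing R] [IsNoetherianRing R] (J K : Ideal R)
    [Finite (R ⧸ J)] [Finite (R ⧸ K)] : Finite (R ⧸ (J * K)) := by
  haveI hfinJ' : Finite ((R ⧸ (J * K)) ⧸ J.map (Ideal.Quotient.mk (J * K))) := by
    have e := (DoubleQuot.quotQuotEquivQuotSup (J * K) J).trans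
      (Ideal.quotEquivOfEq (sup_eq_right.mpr Ideal.mul_le_left))
    exact Finite.of_equiv _ e.symm.toEquiv
  haveI hfinK' : Finite ((R ⧸ (J * K)) ⧸ K.map (Ideal.Quotient.mk (J * K))) := by
    have e := (DoubleQuot.quotQuotEquivQuotSup (J * K) K).trans
      (Ideal.quotEquivOfEq (sup_eq_right.mpr Ideal.mul_le_right))
    exact Finite.of_equiv _ e.symm.toEquiv
  haveI : Module.Finite (R ⧸ (J * K)) (J.map (Ideal.Quotient.mk (J * K))) :=
    Module.Finite.iff_fg.mpr (IsNoetherian.noetherian _)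
  haveI hfin : Finite (J.map (Ideal.Quotient.mk (J * K))) := by
    refine aux_finite_of_fg_of_smul_zero (K.map (Ideal.Quotient.mk (J * K))) ?_
    intro a ha m
    have hval : a * (m : R ⧸ (J * K)) ∈
        K.map (Ideal.Quotient.mk (J * K)) * J.map (Ideal.Quotient.mk (J * K)) :=
      Ideal.mul_mem_mul ha m.2
    rw [← Ideal.map_mul, mul_comm K J, Ideal.map_quotient_self] at hval
    have hz : a * (m : R ⧸ (J * K)) = 0 := by simpa using hval
    exact Subtype.ext (by simpa [smul_eq_mul] using hz)
  let σ : (R ⧸ (J * K)) ⧸ J.map (Ideal.Quotient.mk (J * K)) → R ⧸ (J * K) :=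
    Function.surjInv Ideal.Quotient.mk_surjective
  have hσ : ∀ y, Ideal.Quotient.mk (J.map (Ideal.Quotient.mk (J * K))) (σ y) = y :=
    Function.surjInv_eq _
  refine Finite.of_surjective
    (fun p : ((R ⧸ (J * K)) ⧸ J.map (Ideal.Quotient.mk (J * K))) ×
        J.map (Ideal.Quotient.mk (J * K)) => σ p.1 + (p.2 : R ⧸ (J * K))) ?_
  intro r
  have hmem : r - σ (Ideal.Quotient.mk (J.map (Ideal.Quotient.mk (J * K))) r) ∈
      J.map (Ideal.Quotient.mk (J * K)) := by
    rw [← Ideal.Quotient.eq_zero_iff_mem, map_sub, hσ, sub_self]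
  exact ⟨⟨Ideal.Quotient.mk _ r, ⟨_, hmem⟩⟩, by simp⟩

/-- Powers. -/
lemma aux_finite_quot_pow {R : Type*} [CommRing R] [IsNoetherianRing R] (J : Ideal R)
    [Finite (R ⧸ J)] (n : ℕ) : Finite (R ⧸ (J ^ (n + 1))) := by
  induction n with
  | zero => rw [pow_one]; infer_instance
  | succ k ih =>
      rw [pow_succ]
      exact aux_finite_quot_mul (J ^ (k + 1)) J

/-- Main auxiliary result, for an abstract ring. -/
lemma aux_main {B : Type*} [CommRing B] [IsDomain B] [IsNoetherianRing B]
    [Algebra.FiniteType ℤ B] (hdim : ringKrullDim B = 1)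
    (I : Ideal B) (hI : I ≠ ⊥) : Finite (B ⧸ I) := by
  haveI : IsJacobsonRing ℤ := aux_int_isJacobsonRing
  -- each minimal prime over I has finite residue field
  have hmin : ∀ p ∈ I.minimalPrimes, Finite (B ⧸ p) := by
    intro p hp
    haveI hpp : p.IsPrime := hp.1.1
    have hpbot : p ≠ ⊥ := by
      rintro rfl
      exact hI (le_bot_iff.mp hp.1.2)
    haveI : p.IsMaximal := aux_isMaximal_of_dim_one hdim hpbot
    letI : Field (B ⧸ p) := Ideal.Quotient.field p
    haveI : Algebra.FiniteType ℤ (B ⧸ p) :=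
      Algebra.FiniteType.of_surjective
        (Ideal.Quotient.mkₐ ℤ p) Ideal.Quotient.mk_surjective
    haveI : Module.Finite ℤ (B ⧸ p) := finite_of_finite_type_of_isJacobsonRing ℤ (B ⧸ p)
    exact aux_finite_of_field_of_finiteInt (B ⧸ p)
  -- the quotient by the radical is finite
  have hminfin : I.minimalPrimes.Finite := by
    rw [Ideal.minimalPrimes_eq_comap]
    exact ((minimalPrimes.finite_of_isNoetherianRing (B ⧸ I)).image _)
  haveI : Finite ↥I.minimalPrimes := hminfin.to_subtype
  haveI instp : ∀ p : ↥I.minimalPrimes, Finite (B ⧸ (p : Ideal B)) := fun p => hmin p p.2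
  haveI hfinrad : Finite (B ⧸ I.radical) := by
    let G : B →+* ∀ p : ↥I.minimalPrimes, B ⧸ (p : Ideal B) :=
      Pi.ringHom (fun p => Ideal.Quotient.mk (p : Ideal B))
    have hker : ∀ a ∈ I.radical, G a = 0 := by
      intro a ha
      funext p
      have hap : a ∈ (p : Ideal B) := by
        rw [← Ideal.sInf_minimalPrimes] at ha
        exact (sInf_le p.2 : sInf I.minimalPrimes ≤ (p : Ideal B)) ha
      exact (Ideal.Quotient.eq_zero_iff_mem).mpr hap
    let F : B ⧸ I.radical →+* ∀ p : ↥I.minimalPrimes, B ⧸ (p : Ideal B) :=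
      Ideal.Quotient.lift I.radical G hker
    refine Finite.of_injective F ?_
    intro x y hxy
    obtain ⟨b, rfl⟩ := Ideal.Quotient.mk_surjective x
    obtain ⟨c, rfl⟩ := Ideal.Quotient.mk_surjective y
    rw [Ideal.Quotient.eq, ← Ideal.sInf_minimalPrimes, Submodule.mem_sInf]
    intro p hp
    have hbc : G b = G c := by simpa [F] using hxy
    have hcomp := congrFun hbc ⟨p, hp⟩
    exact Ideal.Quotient.eq.mp hcomp
  -- conclude by nilpotence of the radical mod I
  obtain ⟨n, hn⟩ := Ideal.exists_pow_le_of_le_radical_of_fg (le_refl I.radical)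
    (IsNoetherian.noetherian I.radical)
  have hle : I.radical ^ (n + 1) ≤ I :=
    le_trans (Ideal.pow_le_pow_right (Nat.le_succ n)) hn
  haveI : Finite (B ⧸ I.radical ^ (n + 1)) := aux_finite_quot_pow I.radical n
  refine Finite.of_surjective (Ideal.Quotient.factor hle) ?_
  intro x
  obtain ⟨b, rfl⟩ := Ideal.Quotient.mk_surjective x
  exact ⟨Ideal.Quotient.mk _ b, Ideal.Quotient.factor_mk hle b⟩

/-- Let `Q` be a finitely generated abelian group and `P` a prime ideal of `ℤQ` such that
the domain `B = ℤQ/P` has Krull dimension 1. Then every nonzero ideal of `B` has finite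
index. -/
theorem stmt6 (Q : Type*) [CommGroup Q] [Group.FG Q]
    (P : Ideal (MonoidAlgebra ℤ Q)) [P.IsPrime]
    (hdim : ringKrullDim (MonoidAlgebra ℤ Q ⧸ P) = 1)
    (I : Ideal (MonoidAlgebra ℤ Q ⧸ P)) (hI : I ≠ ⊥) :
    Finite ((MonoidAlgebra ℤ Q ⧸ P) ⧸ I) := by
  haveI : Monoid.FG Q := Group.fg_iff_monoid_fg.mp ‹Group.FG Q›
  haveI hft : Algebra.FiniteType ℤ (MonoidAlgebra ℤ Q) := MonoidAlgebra.finiteType_of_fg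
  haveI : IsNoetherianRing (MonoidAlgebra ℤ Q) :=
    Algebra.FiniteType.isNoetherianRing ℤ (MonoidAlgebra ℤ Q)
  haveI : Algebra.FiniteType ℤ (MonoidAlgebra ℤ Q ⧸ P) :=
    Algebra.FiniteType.of_surjective (Ideal.Quotient.mkₐ ℤ P) Ideal.Quotient.mk_surjective
  exact @aux_main _ _ _ _ (by convert this; exacts [rfl, Subsingleton.elim _ _]) hdim I hI
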